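/- Let G be a connected graph with base vertex u and let α, β be proper 3-colourings of G. Let R = c_0, ..., c_ℓ be a recolouring sequence from α to β and let H be the associated absolute height function (with H(c_0, ·) ≡ 0 and each single-vertex recolouring changing that vertex's height by ±2 and no others). Then ℓ ≥ (1/2) · Σ_{v ∈ V} |H(β, v)|. -/
import Mathlib


/-- if `R = c 0, …, c ℓ` is a recolouring sequence of proper
3-colourings from `α` to `β` of a connected graph `G`, and `H` is the
associated absolute height function (`H 0 ≡ 0`; each single-vertex recolouring
changes that vertex's height by `±2` — `+2` when the colour decreases by one
mod 3, `-2` when it increases — and no others), then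
`ℓ ≥ (1/2) Σ_v |H(β, v)|`. -/
theorem stmt_12 {V : Type*} [Fintype V] (G : SimpleGraph V)
    (hconn : G.Connected) (ℓ : ℕ) (α β : V → ℤ)
    (c : ℕ → V → ℤ) (H : ℕ → V → ℤ)
    (hc0 : c 0 = α) (hcℓ : c ℓ = β)
    (hrange : ∀ i ≤ ℓ, ∀ v : V, c i v ∈ ({1, 2, 3} : Set ℤ))
    (hproper : ∀ i ≤ ℓ, ∀ u v : V, G.Adj u v → c i u ≠ c i v)
    (hstep : ∀ i < ℓ, ∃ x : V, ∀ v : V, v ≠ x → c i v = c (i + 1) v)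
    (hH0 : ∀ v : V, H 0 v = 0)
    (hHrec : ∀ i < ℓ, ∀ v : V, H (i + 1) v - H i v =
      if c (i + 1) v = c i v then 0
      else if c (i + 1) v ≡ c i v - 1 [ZMOD 3] then 2 else -2) :
    ∑ v : V, |H ℓ v| ≤ 2 * (ℓ : ℤ) := by
  classical
  have key : ∀ i < ℓ, ∑ v : V, |H (i + 1) v - H i v| ≤ 2 := by
    intro i hi
    obtain ⟨x, hx⟩ := hstep i hi
    have h1 : ∀ v : V, v ≠ x → |H (i + 1) v - H i v| = 0 := by
      intro v hv
      rw [hHrec i hi v, if_pos (hx v hv).symm, abs_zero]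
    calc ∑ v : V, |H (i + 1) v - H i v|
        = ∑ v : V, if v = x then |H (i + 1) v - H i v| else 0 := by
          apply Finset.sum_congr rfl
          intro v _
          split
          · rfl
          · exact h1 v (by assumption)
      _ = |H (i + 1) x - H i x| := by
          rw [Finset.sum_ite_eq' Finset.univ x (fun v => |H (i + 1) v - H i v|),
            if_pos (Finset.mem_univ x)]
      _ ≤ 2 := by
          rw [hHrec i hi x]
          split_ifs <;> norm_num
  have tel : ∀ v : V, H ℓ v = ∑ i ∈ Finset.range ℓ, (H (i + 1) v - H i v) := by
    intro v
    rw [Finset.sum_range_sub (fun i => H i v), hH0, sub_zero]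
  calc ∑ v : V, |H ℓ v|
      ≤ ∑ v : V, ∑ i ∈ Finset.range ℓ, |H (i + 1) v - H i v| := by
        apply Finset.sum_le_sum
        intro v _
        rw [tel v]
        exact Finset.abs_sum_le_sum_abs _ _
    _ = ∑ i ∈ Finset.range ℓ, ∑ v : V, |H (i + 1) v - H i v| := Finset.sum_comm
    _ ≤ ∑ i ∈ Finset.range ℓ, (2 : ℤ) := by
        apply Finset.sum_le_sum
        intro i hi
        exact key i (Finset.mem_range.mp hi)
    _ = 2 * (ℓ : ℤ) := by simp [mul_comm]
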